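/- Let (Ω, μ) be a probability space, let 0 < δ ≤ π, and let ε : Ω → ℝ be a random variable whose pushforward law is the uniform distribution on [-δ, δ]. Let θ̂ ∈ ℝ be fixed, let h̄ ∈ ℂ^N, and let h̃ : Ω → ℂ^N have components in L²(μ) with mean zero, and suppose ε and h̃ are independent. Let R be the covariance matrix of h̃, i.e., R a b = ∫ h̃_a · conj(h̃_b) dμ. Define h(ω) = exp(i(θ̂ + ε(ω))) • h̄ + h̃(ω), set ρ := sin(δ)/δ and m := ρ · exp(i·θ̂) • h̄. Then for all indices a, b: ∫ (h_a − m_a) · conj(h_b − m_b) dμ = R a b + (1 − ρ²) · h̄_a · conj(h̄_b); that is, the covariance matrix of h equals Σ := R + (1 − ρ²) · h̄ h̄^H. -/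

import Mathlib

open MeasureTheory ComplexConjugate

lemma indep_mul_integral_complex {Ω : Type*} [MeasurableSpace Ω] {μ : Measure Ω}
    [IsProbabilityMeasure μ]
    {F G : Ω → ℂ} (h : ProbabilityTheory.IndepFun F G μ)
    (hF : Integrable F μ) (hG : Integrable G μ) :
    ∫ ω, F ω * G ω ∂μ = (∫ ω, F ω ∂μ) * ∫ ω, G ω ∂μ := by
  have hrr := (h.comp Complex.measurable_re Complex.measurable_re).integral_mul_eq_mul_integral hF.re.1 hG.re.1
  have hri := (h.comp Complex.measurable_re Complex.measurable_im).integral_mul_eq_mul_integral hF.re.1 hG.im.1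
  have hir := (h.comp Complex.measurable_im Complex.measurable_re).integral_mul_eq_mul_integral hF.im.1 hG.re.1
  have hii := (h.comp Complex.measurable_im Complex.measurable_im).integral_mul_eq_mul_integral hF.im.1 hG.im.1
  have Irr := (h.comp Complex.measurable_re Complex.measurable_re).integrable_mul hF.re hG.re
  have Iri := (h.comp Complex.measurable_re Complex.measurable_im).integrable_mul hF.re hG.im
  have Iir := (h.comp Complex.measurable_im Complex.measurable_re).integrable_mul hF.im hG.re
  have Iii := (h.comp Complex.measurable_im Complex.measurable_im).integrable_mul hF.im hG.im
  simp only [Function.comp_def, Pi.mul_def] at hrr hri hir hii Irr Iri Iir Iii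
  have hFG : Integrable (fun ω => F ω * G ω) μ := h.integrable_mul hF hG
  have hFre : ∫ ω, (F ω).re ∂μ = (∫ ω, F ω ∂μ).re := by simpa using integral_re hF
  have hFim : ∫ ω, (F ω).im ∂μ = (∫ ω, F ω ∂μ).im := by simpa using integral_im hF
  have hGre : ∫ ω, (G ω).re ∂μ = (∫ ω, G ω ∂μ).re := by simpa using integral_re hG
  have hGim : ∫ ω, (G ω).im ∂μ = (∫ ω, G ω ∂μ).im := by simpa using integral_im hG
  apply Complex.ext
  · have h1 : (∫ ω, F ω * G ω ∂μ).re = ∫ ω, (F ω * G ω).re ∂μ := by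
      simpa using (integral_re hFG).symm
    rw [h1]
    simp_rw [Complex.mul_re]
    rw [integral_sub Irr Iii, hrr, hii, hFre, hFim, hGre, hGim]
  · have h1 : (∫ ω, F ω * G ω ∂μ).im = ∫ ω, (F ω * G ω).im ∂μ := by
      simpa using (integral_im hFG).symm
    rw [h1]
    simp_rw [Complex.mul_im]
    rw [integral_add Iri Iir, hri, hir, hFre, hFim, hGre, hGim]

lemma integral_coe_complex {Ω : Type*} [MeasurableSpace Ω] {μ : Measure Ω} {g : Ω → ℝ}
    (hg : Integrable g μ) :
    ∫ ω, ((g ω : ℝ) : ℂ) ∂μ = ((∫ ω, g ω ∂μ : ℝ) : ℂ) := by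
  have hgc : Integrable (fun ω => ((g ω : ℝ) : ℂ)) μ := hg.ofReal
  apply Complex.ext
  · have := integral_re hgc
    simp at this
    simpa using this.symm
  · have := integral_im hgc
    simp at this
    simpa using this.symm

/-- Covariance of the Rician channel under imperfect LoS phase tracking:
with `ε` uniform on `[-δ, δ]` independent of the zero-mean square-integrable
NLoS component `h̃` (with covariance `R`), the channel
`h ω = exp (i (θ̂ + ε ω)) • h̄ + h̃ ω` has mean `m = ρ · exp (i θ̂) • h̄` and
covariance `Σ = R + (1 - ρ²) · h̄ h̄ᴴ`, where `ρ = sin δ / δ`. -/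
theorem rician_covariance_imperfect_phase
    {Ω : Type*} [MeasurableSpace Ω] (μ : Measure Ω) [IsProbabilityMeasure μ]
    (N : ℕ) (δ : ℝ) (hδ0 : 0 < δ) (hδπ : δ ≤ Real.pi)
    (ε : Ω → ℝ) (hε_meas : Measurable ε)
    (hε_law : Measure.map ε μ =
      (ENNReal.ofReal (2 * δ))⁻¹ • (volume.restrict (Set.Icc (-δ) δ)))
    (θhat : ℝ) (hbar : Fin N → ℂ)
    (htilde : Ω → Fin N → ℂ)
    (h_L2 : ∀ a, MemLp (fun ω => htilde ω a) 2 μ)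
    (h_mean0 : ∀ a, ∫ ω, htilde ω a ∂μ = 0)
    (h_indep : ProbabilityTheory.IndepFun ε htilde μ)
    (R : Matrix (Fin N) (Fin N) ℂ)
    (hR : ∀ a b, R a b = ∫ ω, htilde ω a * (starRingEnd ℂ) (htilde ω b) ∂μ)
    (h : Ω → Fin N → ℂ)
    (h_def : ∀ ω, h ω = Complex.exp (Complex.I * (θhat + ε ω)) • hbar + htilde ω)
    (ρ : ℝ) (hρ : ρ = Real.sin δ / δ)
    (m : Fin N → ℂ) (hm : m = ((ρ : ℂ) * Complex.exp (Complex.I * θhat)) • hbar) :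
    ∀ a b, ∫ ω, (h ω a - m a) * (starRingEnd ℂ) (h ω b - m b) ∂μ =
      R a b + ((1 - ρ ^ 2 : ℝ) : ℂ) * (hbar a * (starRingEnd ℂ) (hbar b)) := by
  intro a b
  -- the centered LoS phase factor
  set f : ℝ → ℂ :=
    fun x => Complex.exp (Complex.I * (θhat + x)) - (ρ : ℂ) * Complex.exp (Complex.I * θhat)
    with hf_def
  have hfm : Measurable f := by
    apply Measurable.sub _ measurable_const
    exact Complex.measurable_exp.comp
      ((measurable_const.add Complex.measurable_ofReal).const_mul Complex.I)
  -- f is bounded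
  set C0 : ℝ := 1 + ‖(ρ : ℂ) * Complex.exp (Complex.I * θhat)‖ with hC0
  have hf_bd : ∀ x, ‖f x‖ ≤ C0 := by
    intro x
    refine (norm_sub_le _ _).trans ?_
    have : ‖Complex.exp (Complex.I * ((θhat : ℂ) + (x : ℂ)))‖ = 1 := by
      rw [show Complex.I * ((θhat : ℂ) + (x : ℂ)) = ((θhat + x : ℝ) : ℂ) * Complex.I by
        push_cast; ring, Complex.norm_exp_ofReal_mul_I]
    rw [this]
  -- pointwise decomposition of the centered channel
  have key : ∀ (c : Fin N) ω, h ω c - m c = f (ε ω) * hbar c + htilde ω c := by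
    intro c ω
    rw [h_def, hm]
    simp only [Pi.add_apply, Pi.smul_apply, smul_eq_mul, hf_def]
    ring
  -- integrability of the NLoS components
  have hti : ∀ c, Integrable (fun ω => htilde ω c) μ := fun c => (h_L2 c).integrable one_le_two
  have htconj : ∀ c, Integrable (fun ω => conj (htilde ω c)) μ := by
    intro c
    refine (hti c).norm.mono'
      (Complex.continuous_conj.comp_aestronglyMeasurable (hti c).1) ?_
    exact Filter.Eventually.of_forall fun ω => by simp
  -- integrability of the phase factor and products
  have hFaesm : AEStronglyMeasurable (fun ω => f (ε ω)) μ :=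
    (hfm.comp hε_meas).aestronglyMeasurable
  have hFint : Integrable (fun ω => f (ε ω)) μ := by
    refine (integrable_const C0).mono' hFaesm ?_
    exact Filter.Eventually.of_forall fun ω => hf_bd _
  have hAint : Integrable (fun ω => f (ε ω) * conj (f (ε ω))) μ := by
    refine (integrable_const (C0 * C0)).mono'
      (hFaesm.mul (Complex.continuous_conj.comp_aestronglyMeasurable hFaesm)) ?_
    refine Filter.Eventually.of_forall fun ω => ?_
    rw [norm_mul, RCLike.norm_conj]
    have h0 : (0:ℝ) ≤ ‖f (ε ω)‖ := norm_nonneg _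
    exact mul_le_mul (hf_bd (ε ω)) (hf_bd (ε ω)) h0 ((norm_nonneg (f (ε ω))).trans (hf_bd (ε ω)))
  have hBint : Integrable (fun ω => f (ε ω) * conj (htilde ω b)) μ :=
    (htconj b).bdd_mul (c := C0) hFaesm (Filter.Eventually.of_forall fun ω => hf_bd (ε ω))
  have hCint : Integrable (fun ω => conj (f (ε ω)) * htilde ω a) μ := by
    refine (hti a).bdd_mul (c := C0) (Complex.continuous_conj.comp_aestronglyMeasurable hFaesm)
      (Filter.Eventually.of_forall fun ω => ?_)
    rw [RCLike.norm_conj]; exact hf_bd (ε ω)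
  have hsq : ∀ c, Integrable (fun ω => ‖htilde ω c‖ ^ 2) μ := fun c =>
    (memLp_two_iff_integrable_sq_norm (h_L2 c).1).1 (h_L2 c)
  have hDint : Integrable (fun ω => htilde ω a * conj (htilde ω b)) μ := by
    refine ((hsq a).add (hsq b)).mono'
      ((hti a).1.mul (Complex.continuous_conj.comp_aestronglyMeasurable (hti b).1)) ?_
    refine Filter.Eventually.of_forall fun ω => ?_
    simp only [Pi.add_apply]
    rw [norm_mul, RCLike.norm_conj]
    nlinarith [norm_nonneg (htilde ω a), norm_nonneg (htilde ω b),
      sq_nonneg (‖htilde ω a‖ - ‖htilde ω b‖)]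
  -- the mean of cos ε is ρ
  have hcosint : Integrable (fun ω => Real.cos (ε ω)) μ := by
    refine (integrable_const (1:ℝ)).mono'
      ((Real.measurable_cos.comp hε_meas).aestronglyMeasurable) ?_
    exact Filter.Eventually.of_forall fun ω => by
      rw [Real.norm_eq_abs]; exact Real.abs_cos_le_one _
  have hcos : ∫ ω, Real.cos (ε ω) ∂μ = ρ := by
    rw [← integral_map hε_meas.aemeasurable Real.continuous_cos.aestronglyMeasurable, hε_law,
      integral_smul_measure, MeasureTheory.integral_Icc_eq_integral_Ioc,
      ← intervalIntegral.integral_of_le (by linarith : -δ ≤ δ), integral_cos,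
      ENNReal.toReal_inv, ENNReal.toReal_ofReal (by positivity)]
    rw [Real.sin_neg, hρ]
    have := hδ0.ne'
    simp only [smul_eq_mul]
    field_simp <;> ring
  -- value of the "phase variance" term
  have hpt : ∀ x, f x * conj (f x) = ((1 + ρ ^ 2 - 2 * ρ * Real.cos x : ℝ) : ℂ) := by
    intro x
    have hfx : f x = Complex.exp (Complex.I * θhat) * (Complex.exp ((x : ℂ) * Complex.I) - ρ) := by
      simp only [hf_def]
      rw [show Complex.I * ((θhat : ℂ) + (x : ℂ)) = Complex.I * θhat + (x : ℂ) * Complex.I by ring,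
        Complex.exp_add]
      ring
    rw [hfx, Complex.mul_conj, map_mul Complex.normSq]
    have h1 : Complex.normSq (Complex.exp (Complex.I * θhat)) = 1 := by
      rw [Complex.normSq_eq_norm_sq, mul_comm, Complex.norm_exp_ofReal_mul_I]; norm_num
    have h2 : Complex.normSq (Complex.exp ((x : ℂ) * Complex.I) - ρ)
        = 1 + ρ ^ 2 - 2 * ρ * Real.cos x := by
      rw [Complex.normSq_apply]
      simp [Complex.exp_ofReal_mul_I_re, Complex.exp_ofReal_mul_I_im]
      nlinarith [Real.sin_sq_add_cos_sq x]
    rw [h1, h2, one_mul]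
  have hA : ∫ ω, f (ε ω) * conj (f (ε ω)) ∂μ = ((1 - ρ ^ 2 : ℝ) : ℂ) := by
    have : (fun ω => f (ε ω) * conj (f (ε ω)))
        = fun ω => ((1 + ρ ^ 2 - 2 * ρ * Real.cos (ε ω) : ℝ) : ℂ) := funext fun ω => hpt _
    have Ig : Integrable (fun ω => 1 + ρ ^ 2 - 2 * ρ * Real.cos (ε ω)) μ :=
      (integrable_const _).sub (hcosint.const_mul _)
    rw [this, integral_coe_complex Ig]
    have : ∫ ω, (1 + ρ ^ 2 - 2 * ρ * Real.cos (ε ω)) ∂μ = 1 - ρ ^ 2 := by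
      rw [integral_sub (integrable_const _) (hcosint.const_mul _), integral_const,
        integral_const_mul, hcos]
      simp [measure_univ]
      ring
    rw [this]
  -- cross terms vanish by independence
  have hB : ∫ ω, f (ε ω) * conj (htilde ω b) ∂μ = 0 := by
    have hind : ProbabilityTheory.IndepFun (fun ω => f (ε ω)) (fun ω => conj (htilde ω b)) μ :=
      h_indep.comp hfm ((Complex.continuous_conj.measurable.comp (measurable_pi_apply b)))
    rw [indep_mul_integral_complex hind hFint (htconj b)]
    have : ∫ ω, conj (htilde ω b) ∂μ = 0 := by
      rw [integral_conj, h_mean0 b, map_zero]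
    rw [this, mul_zero]
  have hC : ∫ ω, conj (f (ε ω)) * htilde ω a ∂μ = 0 := by
    have hind : ProbabilityTheory.IndepFun (fun ω => conj (f (ε ω))) (fun ω => htilde ω a) μ :=
      h_indep.comp (Complex.continuous_conj.measurable.comp hfm) (measurable_pi_apply a)
    have hconjint : Integrable (fun ω => conj (f (ε ω))) μ := by
      refine hFint.norm.mono' (Complex.continuous_conj.comp_aestronglyMeasurable hFaesm) ?_
      exact Filter.Eventually.of_forall fun ω => by simp
    rw [indep_mul_integral_complex hind hconjint (hti a), h_mean0 a, mul_zero]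
  -- expand the integrand
  have expand : ∀ ω, (h ω a - m a) * conj (h ω b - m b)
      = (f (ε ω) * conj (f (ε ω))) * (hbar a * conj (hbar b))
        + (f (ε ω) * conj (htilde ω b)) * hbar a
        + (conj (f (ε ω)) * htilde ω a) * conj (hbar b)
        + htilde ω a * conj (htilde ω b) := by
    intro ω
    rw [key a ω, key b ω, map_add, map_mul]
    ring
  rw [integral_congr_ae (Filter.Eventually.of_forall expand)]
  have I1 : Integrable (fun ω => f (ε ω) * conj (f (ε ω)) * (hbar a * conj (hbar b))) μ :=
    hAint.mul_const _
  have I2 : Integrable (fun ω => f (ε ω) * conj (htilde ω b) * hbar a) μ := hBint.mul_const _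
  have I3 : Integrable (fun ω => conj (f (ε ω)) * htilde ω a * conj (hbar b)) μ :=
    hCint.mul_const _
  have I12 : Integrable (fun ω => f (ε ω) * conj (f (ε ω)) * (hbar a * conj (hbar b))
      + f (ε ω) * conj (htilde ω b) * hbar a) μ := I1.add I2
  have I123 : Integrable (fun ω => f (ε ω) * conj (f (ε ω)) * (hbar a * conj (hbar b))
      + f (ε ω) * conj (htilde ω b) * hbar a
      + conj (f (ε ω)) * htilde ω a * conj (hbar b)) μ := I12.add I3
  rw [integral_add I123 hDint, integral_add I12 I3, integral_add I1 I2,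
    integral_mul_const, integral_mul_const, integral_mul_const,
    hA, hB, hC, ← hR a b]
  ring
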